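/- Fix h > 0, ξ ∈ ℝ, and real y, t with y ≥ |t|. Then the function c ↦ (1/(2π)) ∫_ℝ e^{−h(s+ic)²} · r(s+ic, y, t) · e^{i(s+ic)ξ} ds is constant on ℝ; in particular, for every c ∈ ℝ this integral equals K^N_h(ξ; y, t), the value at c = 0. -/

import Mathlib

open MeasureTheory

/-- The entire extension of `ζ ↦ sinh ζ / ζ`. -/
noncomputable def sinhc (z : ℂ) : ℂ := if z = 0 then 1 else Complex.sinh z / z

/-- `r(k,y,t) = (1/(2π)) ∫_{−π/2}^{π/2} cosh(k √(y²−t²) sin s) ds`. -/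
noncomputable def rker (k : ℂ) (y t : ℝ) : ℂ :=
  (1 / (2 * (Real.pi : ℂ))) *
    ∫ s in (-(Real.pi / 2))..(Real.pi / 2),
      Complex.cosh (k * (Real.sqrt (y ^ 2 - t ^ 2) : ℂ) * (Real.sin s : ℂ))

/-- `D(k,y,t) = (k² y/(2π)) ∫_{−π/2}^{π/2} sin² s · g(k √(y²−t²) sin s) ds`. -/
noncomputable def Dker (k : ℂ) (y t : ℝ) : ℂ :=
  (k ^ 2 * (y : ℂ) / (2 * (Real.pi : ℂ))) *
    ∫ s in (-(Real.pi / 2))..(Real.pi / 2),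
      ((Real.sin s : ℂ)) ^ 2 * sinhc (k * (Real.sqrt (y ^ 2 - t ^ 2) : ℂ) * (Real.sin s : ℂ))

/-- `K^N_h(ξ; y, t) = (1/(2π)) ∫_ℝ e^{−h k²} r(k,y,t) e^{i k ξ} dk`. -/
noncomputable def KN (h : ℝ) (ξ y t : ℝ) : ℂ :=
  (1 / (2 * (Real.pi : ℂ))) *
    ∫ k : ℝ, Complex.exp (-(h : ℂ) * (k : ℂ) ^ 2) * rker (k : ℂ) y t *
      Complex.exp (Complex.I * (k : ℂ) * (ξ : ℂ))

/-- `K^D_h(ξ; y, t) = (1/(2π)) ∫_ℝ e^{−h k²} D(k,y,t) e^{i k ξ} dk`. -/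
noncomputable def KD (h : ℝ) (ξ y t : ℝ) : ℂ :=
  (1 / (2 * (Real.pi : ℂ))) *
    ∫ k : ℝ, Complex.exp (-(h : ℂ) * (k : ℂ) ^ 2) * Dker (k : ℂ) y t *
      Complex.exp (Complex.I * (k : ℂ) * (ξ : ℂ))

open Filter Metric

lemma norm_cosh_le (w : ℂ) : ‖Complex.cosh w‖ ≤ Real.exp ‖w‖ := by
  have h1 : |w.re| ≤ ‖w‖ := Complex.abs_re_le_norm w
  calc ‖Complex.cosh w‖ = ‖Complex.exp w + Complex.exp (-w)‖ / 2 := by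
        rw [show Complex.cosh w = (Complex.exp w + Complex.exp (-w)) / 2 from rfl, norm_div]
        norm_num
    _ ≤ (Real.exp ‖w‖ + Real.exp ‖w‖) / 2 := by
        have h2 : ‖Complex.exp w + Complex.exp (-w)‖ ≤ Real.exp w.re + Real.exp (-w.re) := by
          refine (norm_add_le _ _).trans_eq ?_
          simp [Complex.norm_exp]
        have e1 : Real.exp w.re ≤ Real.exp ‖w‖ :=
          Real.exp_le_exp.2 ((le_abs_self _).trans h1)
        have e2 : Real.exp (-w.re) ≤ Real.exp ‖w‖ :=
          Real.exp_le_exp.2 ((neg_le_abs _).trans h1)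
        linarith
    _ = Real.exp ‖w‖ := by ring

lemma norm_sinh_le (w : ℂ) : ‖Complex.sinh w‖ ≤ Real.exp ‖w‖ := by
  have h1 : |w.re| ≤ ‖w‖ := Complex.abs_re_le_norm w
  calc ‖Complex.sinh w‖ = ‖Complex.exp w - Complex.exp (-w)‖ / 2 := by
        rw [show Complex.sinh w = (Complex.exp w - Complex.exp (-w)) / 2 from rfl, norm_div]
        norm_num
    _ ≤ (Real.exp ‖w‖ + Real.exp ‖w‖) / 2 := by
        have h2 : ‖Complex.exp w - Complex.exp (-w)‖ ≤ Real.exp w.re + Real.exp (-w.re) := by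
          refine (norm_sub_le _ _).trans_eq ?_
          simp [Complex.norm_exp]
        have e1 : Real.exp w.re ≤ Real.exp ‖w‖ :=
          Real.exp_le_exp.2 ((le_abs_self _).trans h1)
        have e2 : Real.exp (-w.re) ≤ Real.exp ‖w‖ :=
          Real.exp_le_exp.2 ((neg_le_abs _).trans h1)
        linarith
    _ = Real.exp ‖w‖ := by ring

lemma norm_mul_sin_le (k : ℂ) {z : ℝ} (hz : 0 ≤ z) (s : ℝ) :
    ‖k * (z : ℂ) * (Real.sin s : ℂ)‖ ≤ ‖k‖ * z := by
  rw [norm_mul, norm_mul, Complex.norm_real, Complex.norm_real, Real.norm_eq_abs,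
    Real.norm_eq_abs, abs_of_nonneg hz]
  exact mul_le_of_le_one_right (by positivity) (Real.abs_sin_le_one s)

lemma norm_rker_le (k : ℂ) (y t : ℝ) :
    ‖rker k y t‖ ≤ Real.exp (‖k‖ * Real.sqrt (y ^ 2 - t ^ 2)) := by
  set z := Real.sqrt (y ^ 2 - t ^ 2) with hzdef
  have hz : 0 ≤ z := Real.sqrt_nonneg _
  have hpi : (0:ℝ) < Real.pi := Real.pi_pos
  have hnormc : ‖(1 / (2 * (Real.pi : ℂ)))‖ = 1 / (2 * Real.pi) := by
    rw [norm_div, norm_one, norm_mul]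
    simp [Complex.norm_real, abs_of_pos hpi]
  have hint : ‖∫ s in (-(Real.pi / 2))..(Real.pi / 2),
      Complex.cosh (k * (z : ℂ) * (Real.sin s : ℂ))‖ ≤ Real.exp (‖k‖ * z) * Real.pi := by
    have hb := intervalIntegral.norm_integral_le_of_norm_le_const
      (C := Real.exp (‖k‖ * z))
      (f := fun s : ℝ => Complex.cosh (k * (z : ℂ) * (Real.sin s : ℂ)))
      (a := -(Real.pi / 2)) (b := Real.pi / 2)
      (fun s _ => (norm_cosh_le _).trans (Real.exp_le_exp.2 (norm_mul_sin_le k hz s)))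
    calc ‖_‖ ≤ Real.exp (‖k‖ * z) * |Real.pi / 2 - -(Real.pi / 2)| := hb
      _ = Real.exp (‖k‖ * z) * Real.pi := by rw [abs_of_pos (by linarith)]; ring
  calc ‖rker k y t‖ = ‖(1 / (2 * (Real.pi : ℂ)))‖ * ‖_‖ := norm_mul _ _
    _ ≤ (1 / (2 * Real.pi)) * (Real.exp (‖k‖ * z) * Real.pi) := by
        rw [hnormc]; gcongr
    _ = Real.exp (‖k‖ * z) / 2 := by field_simp
    _ ≤ Real.exp (‖k‖ * z) := by linarith [Real.exp_pos (‖k‖ * z)]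

lemma rker_integral_differentiable {z : ℝ} (hz : 0 ≤ z) :
    Differentiable ℂ fun k : ℂ =>
      ∫ s in (-(Real.pi / 2))..(Real.pi / 2), Complex.cosh (k * (z : ℂ) * (Real.sin s : ℂ)) := by
  intro k₀
  have hle : -(Real.pi / 2) ≤ Real.pi / 2 := by linarith [Real.pi_pos]
  have heq : (fun k : ℂ => ∫ s in (-(Real.pi / 2))..(Real.pi / 2),
        Complex.cosh (k * (z : ℂ) * (Real.sin s : ℂ)))
      = fun k : ℂ => ∫ s in Set.Ioc (-(Real.pi / 2)) (Real.pi / 2),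
          Complex.cosh (k * (z : ℂ) * (Real.sin s : ℂ)) := by
    funext k; exact intervalIntegral.integral_of_le hle
  rw [heq]
  set μ := volume.restrict (Set.Ioc (-(Real.pi / 2)) (Real.pi / 2)) with hμ
  have hcont : ∀ k : ℂ, Continuous fun s : ℝ => Complex.cosh (k * (z : ℂ) * (Real.sin s : ℂ)) := by
    intro k; fun_prop
  have hcont' : Continuous fun s : ℝ => Complex.sinh (k₀ * (z : ℂ) * (Real.sin s : ℂ)) *
      ((z : ℂ) * (Real.sin s : ℂ)) := by fun_prop
  have key := hasDerivAt_integral_of_dominated_loc_of_deriv_le (μ := μ)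
    (F := fun (k : ℂ) (s : ℝ) => Complex.cosh (k * (z : ℂ) * (Real.sin s : ℂ)))
    (F' := fun (k : ℂ) (s : ℝ) => Complex.sinh (k * (z : ℂ) * (Real.sin s : ℂ)) *
      ((z : ℂ) * (Real.sin s : ℂ)))
    (x₀ := k₀) (bound := fun _ => Real.exp ((‖k₀‖ + 1) * z) * z) (ball_mem_nhds k₀ one_pos)
    (Eventually.of_forall fun k => ((hcont k).aestronglyMeasurable))
    ((hcont k₀).integrableOn_Ioc)
    hcont'.aestronglyMeasurable
    ?_ ?_ ?_
  · exact key.2.differentiableAt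
  · refine Eventually.of_forall fun s => fun k hk => ?_
    have hknorm : ‖k‖ ≤ ‖k₀‖ + 1 := by
      have := mem_ball_iff_norm.1 hk
      calc ‖k‖ = ‖k₀ + (k - k₀)‖ := by ring_nf
        _ ≤ ‖k₀‖ + ‖k - k₀‖ := norm_add_le _ _
        _ ≤ ‖k₀‖ + 1 := by linarith
    rw [norm_mul]
    have h1 : ‖Complex.sinh (k * (z : ℂ) * (Real.sin s : ℂ))‖ ≤ Real.exp ((‖k₀‖ + 1) * z) := by
      refine (norm_sinh_le _).trans (Real.exp_le_exp.2 ?_)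
      refine (norm_mul_sin_le k hz s).trans ?_
      exact mul_le_mul_of_nonneg_right hknorm hz
    have h2 : ‖(z : ℂ) * (Real.sin s : ℂ)‖ ≤ z := by
      rw [norm_mul, Complex.norm_real, Complex.norm_real, Real.norm_eq_abs, Real.norm_eq_abs,
        abs_of_nonneg hz]
      exact mul_le_of_le_one_right hz (Real.abs_sin_le_one s)
    exact mul_le_mul h1 h2 (norm_nonneg _) (Real.exp_pos _).le
  · exact integrable_const _
  · refine Eventually.of_forall fun s => fun k _ => ?_
    have h1 : HasDerivAt (fun k : ℂ => k * ((z : ℂ) * (Real.sin s : ℂ)))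
        ((z : ℂ) * (Real.sin s : ℂ)) k := hasDerivAt_mul_const _
    simpa [mul_assoc] using h1.ccosh

lemma rker_differentiable (y t : ℝ) : Differentiable ℂ fun k : ℂ => rker k y t :=
  (rker_integral_differentiable (Real.sqrt_nonneg (y ^ 2 - t ^ 2))).const_mul _

/-- For `h > 0`, `ξ ∈ ℝ`, `y ≥ |t|`, the contour integral
`(1/(2π)) ∫_ℝ e^{−h(s+ic)²} r(s+ic,y,t) e^{i(s+ic)ξ} ds` does not depend on `c ∈ ℝ`
and equals its value `K^N_h(ξ; y, t)` at `c = 0`. -/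
theorem contour_shift_KN (h : ℝ) (hh : 0 < h) (ξ y t : ℝ) (hyt : |t| ≤ y) (c : ℝ) :
    (1 / (2 * (Real.pi : ℂ))) *
        (∫ s : ℝ, Complex.exp (-(h : ℂ) * ((s : ℂ) + Complex.I * (c : ℂ)) ^ 2) *
          rker ((s : ℂ) + Complex.I * (c : ℂ)) y t *
          Complex.exp (Complex.I * ((s : ℂ) + Complex.I * (c : ℂ)) * (ξ : ℂ)))
      = KN h ξ y t := by
  have hz : (0:ℝ) ≤ Real.sqrt (y ^ 2 - t ^ 2) := Real.sqrt_nonneg _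
  set z : ℝ := Real.sqrt (y ^ 2 - t ^ 2) with hzdef
  set g : ℂ → ℂ := fun k => Complex.exp (-(h : ℂ) * k ^ 2) * rker k y t *
    Complex.exp (Complex.I * k * (ξ : ℂ)) with hg
  have hgdiff : Differentiable ℂ g := by
    apply Differentiable.mul
    · exact (Differentiable.mul (Complex.differentiable_exp.comp (by fun_prop))
        (rker_differentiable y t))
    · exact Complex.differentiable_exp.comp (by fun_prop)
  have hgc : Continuous g := hgdiff.continuous
  -- pointwise bound
  have hbound : ∀ k : ℂ, ‖g k‖ ≤
      Real.exp (-(h * k.re ^ 2) + h * k.im ^ 2 + ‖k‖ * z + |ξ| * |k.im|) := by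
    intro k
    have hre1 : (-(h : ℂ) * k ^ 2).re = -(h * k.re ^ 2) + h * k.im ^ 2 := by
      simp [pow_two, Complex.mul_re, Complex.mul_im]; ring
    have hre2 : (Complex.I * k * (ξ : ℂ)).re = -(k.im * ξ) := by
      simp [Complex.mul_re, Complex.mul_im]
    have hrk := norm_rker_le k y t
    calc ‖g k‖ = Real.exp ((-(h : ℂ) * k ^ 2).re) * ‖rker k y t‖ *
        Real.exp ((Complex.I * k * (ξ : ℂ)).re) := by
          simp [hg, norm_mul, Complex.norm_exp]
      _ ≤ Real.exp ((-(h : ℂ) * k ^ 2).re) * Real.exp (‖k‖ * z) *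
          Real.exp ((Complex.I * k * (ξ : ℂ)).re) := by
          gcongr
      _ = Real.exp ((-(h : ℂ) * k ^ 2).re + ‖k‖ * z + (Complex.I * k * (ξ : ℂ)).re) := by
          rw [← Real.exp_add, ← Real.exp_add]
      _ ≤ Real.exp (-(h * k.re ^ 2) + h * k.im ^ 2 + ‖k‖ * z + |ξ| * |k.im|) := by
          rw [Real.exp_le_exp, hre1, hre2]
          have : -(k.im * ξ) ≤ |ξ| * |k.im| := by
            calc -(k.im * ξ) ≤ |k.im * ξ| := neg_le_abs _
              _ = |ξ| * |k.im| := by rw [abs_mul]; ring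
          linarith
  -- integrability along horizontal lines
  have hline : ∀ c' : ℝ, Integrable fun s : ℝ => g ((s : ℂ) + (c' : ℂ) * Complex.I) := by
    intro c'
    have hcont : Continuous fun s : ℝ => g ((s : ℂ) + (c' : ℂ) * Complex.I) :=
      hgc.comp (by fun_prop)
    set A : ℝ := h * c' ^ 2 + |c'| * z + |ξ| * |c'| + z ^ 2 / (2 * h) with hA
    have hmaj : Integrable fun s : ℝ => Real.exp A * Real.exp (-(h / 2) * s ^ 2) :=
      (integrable_exp_neg_mul_sq (by positivity)).const_mul _
    refine hmaj.mono' hcont.aestronglyMeasurable (Eventually.of_forall fun s => ?_)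
    have hk : ((s : ℂ) + (c' : ℂ) * Complex.I).re = s ∧
        ((s : ℂ) + (c' : ℂ) * Complex.I).im = c' := by simp
    have hknorm : ‖(s : ℂ) + (c' : ℂ) * Complex.I‖ ≤ |s| + |c'| := by
      refine (norm_add_le _ _).trans ?_
      simp [Complex.norm_real]
    refine (hbound _).trans ?_
    rw [hk.1, hk.2, ← Real.exp_add, Real.exp_le_exp]
    have h1 : ‖(s : ℂ) + (c' : ℂ) * Complex.I‖ * z ≤ (|s| + |c'|) * z :=
      mul_le_mul_of_nonneg_right hknorm hz
    have h2 : |s| * z ≤ h / 2 * s ^ 2 + z ^ 2 / (2 * h) := by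
      have key2 : 2 * h * (|s| * z) ≤ 2 * h * (h / 2 * s ^ 2 + z ^ 2 / (2 * h)) := by
        have e2 : 2 * h * (h / 2 * s ^ 2 + z ^ 2 / (2 * h)) = h ^ 2 * s ^ 2 + z ^ 2 := by
          field_simp
        rw [e2]
        nlinarith [sq_nonneg (h * |s| - z), sq_abs s]
      exact le_of_mul_le_mul_left key2 (by positivity)
    nlinarith [sq_abs s]
  -- vertical side integrals tend to zero
  set C : ℝ := h * c ^ 2 + |c| * z + |ξ| * |c| with hC
  set B : ℝ → ℝ := fun T => Real.exp C * Real.exp (-(T * (h * T - z))) * |c| with hB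
  have hBtends : Tendsto B atTop (nhds 0) := by
    have h1 : Tendsto (fun T : ℝ => h * T - z) atTop atTop := by
      apply tendsto_atTop_add_const_right
      exact (tendsto_const_mul_atTop_of_pos hh).mpr tendsto_id
    have h2 : Tendsto (fun T : ℝ => T * (h * T - z)) atTop atTop :=
      Tendsto.atTop_mul_atTop₀ tendsto_id h1
    have h3 : Tendsto (fun T : ℝ => Real.exp (-(T * (h * T - z)))) atTop (nhds 0) :=
      Real.tendsto_exp_atBot.comp (tendsto_neg_atTop_atBot.comp h2)
    have h4 := (h3.const_mul (Real.exp C)).mul_const |c|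
    simpa [hB] using h4
  have hvbound : ∀ T : ℝ, 0 ≤ T → ∀ x : ℝ, |x| = T →
      ‖∫ y' in (0:ℝ)..c, g ((x : ℂ) + (y' : ℂ) * Complex.I)‖ ≤ B T := by
    intro T hT x hx
    have hb : ∀ y' ∈ Set.uIoc (0:ℝ) c,
        ‖g ((x : ℂ) + (y' : ℂ) * Complex.I)‖
          ≤ Real.exp C * Real.exp (-(T * (h * T - z))) := by
      intro y' hy'
      have absy : |y'| ≤ |c| := by
        rcases le_or_gt 0 c with hc0 | hc0
        · rw [Set.uIoc_of_le hc0] at hy'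
          rw [abs_of_nonneg hc0, abs_of_pos hy'.1]; exact hy'.2
        · rw [Set.uIoc_of_ge hc0.le] at hy'
          rw [abs_of_neg hc0, abs_of_nonpos hy'.2]; linarith [hy'.1]
      have hre : ((x : ℂ) + (y' : ℂ) * Complex.I).re = x ∧
          ((x : ℂ) + (y' : ℂ) * Complex.I).im = y' := by simp
      have hknorm : ‖(x : ℂ) + (y' : ℂ) * Complex.I‖ ≤ T + |c| := by
        refine (norm_add_le _ _).trans ?_
        simp only [Complex.norm_real, Real.norm_eq_abs, norm_mul, Complex.norm_I, mul_one]
        rw [hx]; linarith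
      refine (hbound _).trans ?_
      rw [hre.1, hre.2, ← Real.exp_add, Real.exp_le_exp]
      have hsq : x ^ 2 = T ^ 2 := by rw [← sq_abs x, hx]
      have h1 : ‖(x : ℂ) + (y' : ℂ) * Complex.I‖ * z ≤ (T + |c|) * z :=
        mul_le_mul_of_nonneg_right hknorm hz
      have h2 : h * y' ^ 2 ≤ h * c ^ 2 := by
        have hy2 : y' ^ 2 ≤ c ^ 2 := by
          rw [← sq_abs y', ← sq_abs c]; exact pow_le_pow_left₀ (abs_nonneg _) absy 2
        nlinarith
      have h3 : |ξ| * |y'| ≤ |ξ| * |c| := mul_le_mul_of_nonneg_left absy (abs_nonneg _)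
      rw [hsq]
      nlinarith [abs_nonneg c, hz]
    have hb2 := intervalIntegral.norm_integral_le_of_norm_le_const hb
    refine hb2.trans (le_of_eq ?_)
    rw [hB, sub_zero]
  have tv1 : Tendsto (fun T : ℝ => ∫ y' in (0:ℝ)..c, g ((T : ℂ) + (y' : ℂ) * Complex.I))
      atTop (nhds 0) := by
    rw [tendsto_zero_iff_norm_tendsto_zero]
    refine tendsto_of_tendsto_of_tendsto_of_le_of_le' tendsto_const_nhds hBtends
      (Eventually.of_forall fun T => norm_nonneg _) ?_
    filter_upwards [eventually_ge_atTop (0:ℝ)] with T hT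
    exact hvbound T hT T (abs_of_nonneg hT)
  have tv2 : Tendsto (fun T : ℝ => ∫ y' in (0:ℝ)..c, g (-(T : ℂ) + (y' : ℂ) * Complex.I))
      atTop (nhds 0) := by
    rw [tendsto_zero_iff_norm_tendsto_zero]
    refine tendsto_of_tendsto_of_tendsto_of_le_of_le' tendsto_const_nhds hBtends
      (Eventually.of_forall fun T => norm_nonneg _) ?_
    filter_upwards [eventually_ge_atTop (0:ℝ)] with T hT
    have := hvbound T hT (-T) (by rw [abs_neg, abs_of_nonneg hT])
    simpa [Complex.ofReal_neg] using this
  -- rectangle identity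
  have rect : ∀ T : ℝ,
      (∫ x in -T..T, g (x : ℂ)) - (∫ x in -T..T, g ((x : ℂ) + (c : ℂ) * Complex.I))
        + Complex.I • (∫ y' in (0:ℝ)..c, g ((T : ℂ) + (y' : ℂ) * Complex.I))
        - Complex.I • (∫ y' in (0:ℝ)..c, g (-(T : ℂ) + (y' : ℂ) * Complex.I)) = 0 := by
    intro T
    have H := Complex.integral_boundary_rect_eq_zero_of_differentiableOn g (-(T : ℂ))
      ((T : ℂ) + (c : ℂ) * Complex.I) hgdiff.differentiableOn
    simpa only [Complex.neg_im, Complex.ofReal_im, neg_zero, Complex.ofReal_zero, zero_mul,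
      add_zero, Complex.neg_re, Complex.ofReal_re, Complex.add_re, Complex.mul_re, Complex.I_re,
      mul_zero, Complex.I_im, tsub_zero, Complex.add_im, Complex.mul_im, mul_one, zero_add,
      Complex.ofReal_neg, sub_zero] using H
  -- limits of horizontal integrals
  have hline0 : Integrable fun s : ℝ => g (s : ℂ) := by
    have := hline 0
    simpa using this
  have t1 : Tendsto (fun T : ℝ => ∫ x in -T..T, g ((x : ℂ) + (c : ℂ) * Complex.I)) atTop
      (nhds (∫ s : ℝ, g ((s : ℂ) + (c : ℂ) * Complex.I))) :=
    intervalIntegral_tendsto_integral (hline c) tendsto_neg_atTop_atBot tendsto_id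
  have t0 : Tendsto (fun T : ℝ => ∫ x in -T..T, g (x : ℂ)) atTop
      (nhds (∫ s : ℝ, g (s : ℂ))) :=
    intervalIntegral_tendsto_integral hline0 tendsto_neg_atTop_atBot tendsto_id
  have comb : Tendsto (fun T : ℝ => (∫ x in -T..T, g (x : ℂ))
      + Complex.I • (∫ y' in (0:ℝ)..c, g ((T : ℂ) + (y' : ℂ) * Complex.I))
      - Complex.I • (∫ y' in (0:ℝ)..c, g (-(T : ℂ) + (y' : ℂ) * Complex.I))) atTop
      (nhds (∫ s : ℝ, g (s : ℂ))) := by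
    have := (t0.add (tv1.const_smul Complex.I)).sub (tv2.const_smul Complex.I)
    simpa using this
  have eqT : ∀ T : ℝ, (∫ x in -T..T, g (x : ℂ))
      + Complex.I • (∫ y' in (0:ℝ)..c, g ((T : ℂ) + (y' : ℂ) * Complex.I))
      - Complex.I • (∫ y' in (0:ℝ)..c, g (-(T : ℂ) + (y' : ℂ) * Complex.I))
      = ∫ x in -T..T, g ((x : ℂ) + (c : ℂ) * Complex.I) := by
    intro T
    have := rect T
    simp only [smul_eq_mul] at this ⊢
    linear_combination this
  have key : (∫ s : ℝ, g (s : ℂ)) = ∫ s : ℝ, g ((s : ℂ) + (c : ℂ) * Complex.I) :=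
    tendsto_nhds_unique (comb.congr eqT) t1
  -- conclude
  have hfold : (∫ s : ℝ, Complex.exp (-(h : ℂ) * ((s : ℂ) + Complex.I * (c : ℂ)) ^ 2) *
          rker ((s : ℂ) + Complex.I * (c : ℂ)) y t *
          Complex.exp (Complex.I * ((s : ℂ) + Complex.I * (c : ℂ)) * (ξ : ℂ)))
      = ∫ s : ℝ, g ((s : ℂ) + (c : ℂ) * Complex.I) := by
    simp_rw [mul_comm Complex.I (c : ℂ)]
    rfl
  have hKN : KN h ξ y t = (1 / (2 * (Real.pi : ℂ))) * ∫ s : ℝ, g (s : ℂ) := rfl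
  rw [hfold, ← key, hKN]
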